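/- For an h-transverse lattice polygon Δ with data (d^b, d^t, r, l) the balance condition d^t + ||r|| = d^b + ||l|| holds, and conversely any data (d^b, d^t, r, l) of nonnegative integers d^b, d^t and finitely supported functions r, l : Z → Z_{≥0} with |l| = |r| and d^t + ||r|| = d^b + ||l|| arises from a unique (up to translation) h-transverse convex lattice polygon. -/

import Mathlib

/-- ‖r‖ = ∑ k · r(k) for a multiset of integers r : ℤ →₀ ℕ. -/
def wnormZ (r : ℤ →₀ ℕ) : ℤ := r.sum fun k n => k * n

/-- |r| = ∑ r(k), the cardinality of the multiset r. -/
def cardZ (r : ℤ →₀ ℕ) : ℕ := r.sum fun _ n => n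

/-- The data of an h-transverse convex lattice polygon Δ with bottom edge
length db, top edge length dt, right normal-slope multiset r and left
normal-slope multiset l, normalized up to translation: xL j, xR j are the
x-coordinates of the left and right boundary at height j (0 ≤ j ≤ h), with
xL 0 = 0.  Convexity forces the right steps xR j - xR (j+1) nondecreasing and
the left steps xL j - xL (j+1) nonincreasing; r and l record the multisets of
steps (the slopes of the outer normals on the right and left sides, with
multiplicity the lattice lengths). -/
def IsHTPolygon (db dt : ℕ) (r l : ℤ →₀ ℕ) (h : ℕ) (xL xR : ℕ → ℤ) : Prop :=
  xL 0 = 0 ∧ xR 0 = (db : ℤ) ∧ xR h - xL h = (dt : ℤ) ∧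
  (∀ j, j ≤ h → xL j ≤ xR j) ∧
  (∀ j, j + 2 ≤ h → xR j - xR (j + 1) ≤ xR (j + 1) - xR (j + 2)) ∧
  (∀ j, j + 2 ≤ h → xL (j + 1) - xL (j + 2) ≤ xL j - xL (j + 1)) ∧
  (∀ k : ℤ, r k = ((Finset.range h).filter fun j => xR j - xR (j + 1) = k).card) ∧
  (∀ k : ℤ, l k = ((Finset.range h).filter fun j => xL j - xL (j + 1) = k).card) ∧
  (∀ j, h ≤ j → xL (j + 1) = xL j ∧ xR (j + 1) = xR j)

/-- Counts condition as a multiset identity. -/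
lemma counts_iff (r : ℤ →₀ ℕ) (h : ℕ) (s : ℕ → ℤ) :
    (∀ k : ℤ, r k = ((Finset.range h).filter fun j => s j = k).card) ↔
      r.toMultiset = Multiset.map s (Finset.range h).val := by
  have key : ∀ k : ℤ, (((Finset.range h).filter fun j => s j = k).card : ℕ)
      = (Multiset.map s (Finset.range h).val).count k := by
    intro k
    rw [Multiset.count_map, Finset.card, Finset.filter_val]
    exact congrArg Multiset.card (Multiset.filter_congr fun x _ => eq_comm)
  constructor
  · intro hc
    ext k
    rw [Finsupp.count_toMultiset, hc k, key k]
  · intro he k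
    rw [← Finsupp.count_toMultiset r k, he, ← key k]

lemma card_of_counts {r : ℤ →₀ ℕ} {h : ℕ} {s : ℕ → ℤ}
    (he : r.toMultiset = Multiset.map s (Finset.range h).val) : cardZ r = h := by
  have := congrArg Multiset.card he
  rw [Finsupp.card_toMultiset, Multiset.card_map] at this
  simpa [cardZ, Function.id_def] using this

lemma sum_toMultiset_eq (r : ℤ →₀ ℕ) : r.toMultiset.sum = wnormZ r := by
  rw [Finsupp.sum_toMultiset]
  unfold wnormZ
  congr 1
  ext a n
  rw [nsmul_eq_mul, mul_comm]

lemma wnorm_of_counts {r : ℤ →₀ ℕ} {h : ℕ} {s : ℕ → ℤ}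
    (he : r.toMultiset = Multiset.map s (Finset.range h).val) :
    wnormZ r = ∑ j ∈ Finset.range h, s j := by
  rw [← sum_toMultiset_eq, he]; rfl

/-- chain a "consecutive" monotonicity hypothesis -/
lemma mono_of_succ (s : ℕ → ℤ) (h : ℕ) (H : ∀ j, j + 2 ≤ h → s j ≤ s (j + 1)) :
    ∀ i j, i ≤ j → j + 1 ≤ h → s i ≤ s j := by
  intro i j hij
  induction j, hij using Nat.le_induction with
  | base => intro _; exact le_refl _
  | succ n hn ih =>
    intro hn1
    exact le_trans (ih (by omega)) (H n (by omega))

lemma asc_aux (f : ℕ → ℤ) : ∀ j, (∀ i, i < j → f i ≤ f (i + 1)) → f 0 ≤ f j := by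
  intro j
  induction j with
  | zero => intro _; exact le_refl _
  | succ n ih =>
    intro H
    exact le_trans (ih fun i hi => H i (by omega)) (H n (by omega))

lemma desc_aux (f : ℕ → ℤ) (a : ℕ) : ∀ b, a ≤ b → (∀ m, a ≤ m → m + 1 ≤ b → f (m + 1) ≤ f m) →
    f b ≤ f a := by
  intro b hab
  induction b, hab using Nat.le_induction with
  | base => intro _; exact le_refl _
  | succ n hn ih =>
    intro H
    exact le_trans (H n (by omega) (by omega)) (ih fun m hm hm1 => H m hm (by omega))

/-- a discretely concave function nonnegative at the endpoints is nonnegative. -/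
lemma conc (f : ℕ → ℤ) (h : ℕ)
    (hd : ∀ i, i + 2 ≤ h → f (i + 2) - f (i + 1) ≤ f (i + 1) - f i)
    (h0 : 0 ≤ f 0) (hh : 0 ≤ f h) : ∀ j, j ≤ h → 0 ≤ f j := by
  intro j hj
  by_contra hneg
  push_neg at hneg
  have hex : ∃ i, i < j ∧ f (i + 1) < f i := by
    by_contra hno
    push_neg at hno
    exact absurd (asc_aux f j fun i hi => hno i hi) (by omega)
  obtain ⟨i, hij, hdesc⟩ := hex
  have hanti : ∀ m, i ≤ m → m + 1 ≤ h → f (m + 1) - f m ≤ f (i + 1) - f i := by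
    have := mono_of_succ (fun m => -(f (m + 1) - f m)) h
      (fun n hn => by
        show -(f (n + 1) - f n) ≤ -(f (n + 2) - f (n + 1))
        have := hd n hn; omega)
    intro m him hm1
    have h2 : -(f (i + 1) - f i) ≤ -(f (m + 1) - f m) := this i m him hm1
    omega
  have : f h ≤ f j := by
    apply desc_aux f j h hj
    intro m hm hm1
    have := hanti m (by omega) (by omega)
    omega
  omega

/- Statement 14: for an h-transverse lattice polygon with data (db, dt, r, l)
the balance condition |l| = |r| and dt + ‖r‖ = db + ‖l‖ holds; conversely, any
data (db, dt, r, l) with |l| = |r| and dt + ‖r‖ = db + ‖l‖ arises from a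
unique (up to translation; here normalized by xL 0 = 0 and bottom at height 0)
h-transverse convex lattice polygon. -/
theorem stmt_14 (db dt : ℕ) (r l : ℤ →₀ ℕ) :
    (∀ (h : ℕ) (xL xR : ℕ → ℤ), IsHTPolygon db dt r l h xL xR →
        cardZ l = cardZ r ∧ (dt : ℤ) + wnormZ r = (db : ℤ) + wnormZ l) ∧
    (cardZ l = cardZ r → (dt : ℤ) + wnormZ r = (db : ℤ) + wnormZ l →
        ∃! p : (ℕ → ℤ) × (ℕ → ℤ), IsHTPolygon db dt r l (cardZ r) p.1 p.2) := by
  constructor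
  · -- direct part
    rintro h xL xR ⟨hL0, hR0, htop, _, _, _, hcr, hcl, _⟩
    have her : r.toMultiset = Multiset.map (fun j => xR j - xR (j + 1)) (Finset.range h).val :=
      (counts_iff r h _).1 hcr
    have hel : l.toMultiset = Multiset.map (fun j => xL j - xL (j + 1)) (Finset.range h).val :=
      (counts_iff l h _).1 hcl
    have hcardr : cardZ r = h := card_of_counts her
    have hcardl : cardZ l = h := card_of_counts hel
    have hwr : wnormZ r = xR 0 - xR h := by
      rw [wnorm_of_counts her, Finset.sum_range_sub']
    have hwl : wnormZ l = xL 0 - xL h := by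
      rw [wnorm_of_counts hel, Finset.sum_range_sub']
    refine ⟨hcardl.trans hcardr.symm, ?_⟩
    rw [hwr, hwl, hR0, hL0]
    omega
  · -- converse part
    intro hcard hbal
    obtain ⟨h, hh⟩ : ∃ h, cardZ r = h := ⟨_, rfl⟩
    rw [hh] at hcard ⊢
    set Lr : List ℤ := Multiset.sort r.toMultiset (· ≤ ·) with hLrdef
    set Ll : List ℤ := (Multiset.sort l.toMultiset (· ≤ ·)).reverse with hLldef
    have hLrm : (↑Lr : Multiset ℤ) = r.toMultiset := Multiset.sort_eq _ _
    have hLlm : (↑Ll : Multiset ℤ) = l.toMultiset := by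
      rw [hLldef, Multiset.coe_reverse]; exact Multiset.sort_eq _ _
    have hcr : cardZ r = Multiset.card r.toMultiset := by
      rw [Finsupp.card_toMultiset]; rfl
    have hcl : cardZ l = Multiset.card l.toMultiset := by
      rw [Finsupp.card_toMultiset]; rfl
    have hLrlen : Lr.length = h := by
      have h1 : Lr.length = Multiset.card r.toMultiset := Multiset.length_sort _
      rw [h1, ← hcr, hh]
    have hLllen : Ll.length = h := by
      have h1 : Ll.length = Multiset.card l.toMultiset := by
        rw [hLldef, List.length_reverse]; exact Multiset.length_sort _
      rw [h1, ← hcl, hcard]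
    have hLrsort : Lr.Pairwise (· ≤ ·) := Multiset.pairwise_sort _ _
    have hLlsort : Ll.Pairwise (· ≥ ·) := by
      rw [hLldef, List.pairwise_reverse]
      exact (Multiset.pairwise_sort _ (· ≤ ·)).imp fun {a b} (hab : a ≤ b) => hab
    set sR : ℕ → ℤ := fun j => Lr.getD j 0 with hsRdef
    set sL : ℕ → ℤ := fun j => Ll.getD j 0 with hsLdef
    -- monotonicity of the step sequences
    have hsRmono : ∀ i j, i ≤ j → j < h → sR i ≤ sR j := by
      intro i j hij hjh
      rcases eq_or_lt_of_le hij with rfl | hlt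
      · exact le_refl _
      · have hi : i < Lr.length := by omega
        have hj : j < Lr.length := by omega
        rw [hsRdef]
        simp only [List.getD_eq_getElem?_getD, List.getElem?_eq_getElem hi,
          List.getElem?_eq_getElem hj, Option.getD_some]
        exact (List.pairwise_iff_getElem.1 hLrsort) i j hi hj hlt
    have hsLanti : ∀ i j, i ≤ j → j < h → sL j ≤ sL i := by
      intro i j hij hjh
      rcases eq_or_lt_of_le hij with rfl | hlt
      · exact le_refl _
      · have hi : i < Ll.length := by omega
        have hj : j < Ll.length := by omega
        rw [hsLdef]
        simp only [List.getD_eq_getElem?_getD, List.getElem?_eq_getElem hi,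
          List.getElem?_eq_getElem hj, Option.getD_some]
        exact (List.pairwise_iff_getElem.1 hLlsort) i j hi hj hlt
    have hsR0 : ∀ j, h ≤ j → sR j = 0 := by
      intro j hj
      rw [hsRdef]
      exact List.getD_eq_default _ _ (by omega)
    have hsL0 : ∀ j, h ≤ j → sL j = 0 := by
      intro j hj
      rw [hsLdef]
      exact List.getD_eq_default _ _ (by omega)
    -- the lists are the maps of the step functions
    have hmapR : (List.range h).map sR = Lr := by
      apply List.ext_getElem
      · simp [hLrlen]
      · intro i hi hi'
        simp only [List.getElem_map, List.getElem_range, hsRdef]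
        simp [List.getD_eq_getElem?_getD, List.getElem?_eq_getElem hi']
    have hmapL : (List.range h).map sL = Ll := by
      apply List.ext_getElem
      · simp [hLllen]
      · intro i hi hi'
        simp only [List.getElem_map, List.getElem_range, hsLdef]
        simp [List.getD_eq_getElem?_getD, List.getElem?_eq_getElem hi']
    have hmsR : r.toMultiset = Multiset.map sR (Finset.range h).val := by
      rw [← hLrm, ← hmapR]; rfl
    have hmsL : l.toMultiset = Multiset.map sL (Finset.range h).val := by
      rw [← hLlm, ← hmapL]; rfl
    -- the polygon
    set xR : ℕ → ℤ := fun j => (db : ℤ) - ∑ i ∈ Finset.range j, sR i with hxRdef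
    set xL : ℕ → ℤ := fun j => - ∑ i ∈ Finset.range j, sL i with hxLdef
    have hstepR : ∀ j, xR j - xR (j + 1) = sR j := by
      intro j; rw [hxRdef]; simp [Finset.sum_range_succ]
    have hstepL : ∀ j, xL j - xL (j + 1) = sL j := by
      intro j; rw [hxLdef]; simp [Finset.sum_range_succ]
    have hsumR : ∑ i ∈ Finset.range h, sR i = wnormZ r := (wnorm_of_counts hmsR).symm
    have hsumL : ∑ i ∈ Finset.range h, sL i = wnormZ l := (wnorm_of_counts hmsL).symm
    have hxRh : xR h = (db : ℤ) - wnormZ r := by rw [hxRdef]; simp [hsumR]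
    have hxLh : xL h = - wnormZ l := by rw [hxLdef]; simp [hsumL]
    have htop : xR h - xL h = (dt : ℤ) := by rw [hxRh, hxLh]; omega
    have hwidth : ∀ j, j ≤ h → xL j ≤ xR j := by
      have := conc (fun j => xR j - xL j) h ?_ ?_ ?_
      · intro j hj
        have h2 : (0:ℤ) ≤ xR j - xL j := this j hj
        omega
      · intro i hi
        show xR (i + 2) - xL (i + 2) - (xR (i + 1) - xL (i + 1)) ≤
          xR (i + 1) - xL (i + 1) - (xR i - xL i)
        have h1 : xR (i+1) - xR (i+2) = sR (i+1) := hstepR (i+1)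
        have h2 : xR i - xR (i+1) = sR i := hstepR i
        have h3 : xL (i+1) - xL (i+2) = sL (i+1) := hstepL (i+1)
        have h4 : xL i - xL (i+1) = sL i := hstepL i
        have h5 : sR i ≤ sR (i+1) := hsRmono i (i+1) (by omega) (by omega)
        have h6 : sL (i+1) ≤ sL i := hsLanti i (i+1) (by omega) (by omega)
        omega
      · show (0:ℤ) ≤ xR 0 - xL 0
        simp [hxRdef, hxLdef]
      · show (0:ℤ) ≤ xR h - xL h
        rw [htop]; positivity
    refine ⟨(xL, xR), ⟨?_, ?_, htop, hwidth, ?_, ?_, ?_, ?_, ?_⟩, ?_⟩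
    · simp [hxLdef]
    · simp [hxRdef]
    · intro j hj
      rw [hstepR, hstepR]
      exact hsRmono j (j + 1) (by omega) (by omega)
    · intro j hj
      rw [hstepL, hstepL]
      exact hsLanti j (j + 1) (by omega) (by omega)
    · intro k
      have := (counts_iff r h sR).2 hmsR k
      rw [this]
      congr 1
      apply Finset.filter_congr
      intro j _
      rw [hstepR j]
    · intro k
      have := (counts_iff l h sL).2 hmsL k
      rw [this]
      congr 1
      apply Finset.filter_congr
      intro j _
      rw [hstepL j]
    · intro j hj
      constructor
      · rw [hxLdef]; simp [Finset.sum_range_succ, hsL0 j hj]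
      · rw [hxRdef]; simp [Finset.sum_range_succ, hsR0 j hj]
    · -- uniqueness
      rintro ⟨yL, yR⟩ ⟨hL0, hR0, -, -, hconvR, hconvL, hcntr, hcntl, hconst⟩
      simp only at hL0 hR0 hconvR hconvL hcntr hcntl hconst
      set tR : ℕ → ℤ := fun j => yR j - yR (j + 1) with htRdef
      set tL : ℕ → ℤ := fun j => yL j - yL (j + 1) with htLdef
      have htRmono : ∀ i j, i ≤ j → j < h → tR i ≤ tR j :=
        fun i j hij hjh => mono_of_succ tR h (fun n hn => hconvR n hn) i j hij (by omega)
      have htLanti : ∀ i j, i ≤ j → j < h → tL j ≤ tL i := by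
        intro i j hij hjh
        have key := mono_of_succ (fun m => -(tL m)) h
          (fun n hn => by
            show -(tL n) ≤ -(tL (n + 1))
            have h1 := hconvL n hn
            simp only [htLdef]
            have e : yL (n + 1 + 1) = yL (n + 2) := rfl
            omega) i j hij (by omega)
        have : -(tL i) ≤ -(tL j) := key
        omega
      have hmr : r.toMultiset = Multiset.map tR (Finset.range h).val :=
        (counts_iff r h tR).1 hcntr
      have hml : l.toMultiset = Multiset.map tL (Finset.range h).val :=
        (counts_iff l h tL).1 hcntl
      -- the sorted lists agree
      set Mr : List ℤ := (List.range h).map tR with hMrdef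
      set Ml : List ℤ := (List.range h).map tL with hMldef
      have hMrsort : Mr.Pairwise (· ≤ ·) := by
        rw [List.pairwise_iff_getElem]
        intro i j hi hj hij
        simp only [hMrdef, List.getElem_map, List.getElem_range]
        have hj' : j < h := by simpa [hMrdef] using hj
        exact htRmono _ _ (by omega) hj'
      have hMlsort : Ml.Pairwise (· ≥ ·) := by
        rw [List.pairwise_iff_getElem]
        intro i j hi hj hij
        simp only [hMldef, List.getElem_map, List.getElem_range]
        have hj' : j < h := by simpa [hMldef] using hj
        exact htLanti _ _ (by omega) hj'
      have hMrLr : Mr = Lr := by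
        apply List.Perm.eq_of_pairwise' hMrsort hLrsort
        rw [← Multiset.coe_eq_coe]
        have : (↑Mr : Multiset ℤ) = r.toMultiset := by rw [hmr]; rfl
        rw [this, hLrm]
      have hMlLl : Ml = Ll := by
        apply List.Perm.eq_of_pairwise' hMlsort hLlsort
        rw [← Multiset.coe_eq_coe]
        have : (↑Ml : Multiset ℤ) = l.toMultiset := by rw [hml]; rfl
        rw [this, hLlm]
      have htR : ∀ j, j < h → tR j = sR j := by
        intro j hj
        have h1 : Mr.getD j 0 = tR j := by
          rw [hMrdef]
          have hj' : j < ((List.range h).map tR).length := by simpa using hj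
          simp [List.getD_eq_getElem?_getD, List.getElem?_eq_getElem hj']
        rw [← h1, hMrLr]
      have htL : ∀ j, j < h → tL j = sL j := by
        intro j hj
        have h1 : Ml.getD j 0 = tL j := by
          rw [hMldef]
          have hj' : j < ((List.range h).map tL).length := by simpa using hj
          simp [List.getD_eq_getElem?_getD, List.getElem?_eq_getElem hj']
        rw [← h1, hMlLl]
      -- now yR = xR and yL = xL
      have hyR : ∀ j, yR j = xR j := by
        intro j
        induction j with
        | zero => rw [hR0, hxRdef]; simp
        | succ n ih =>
          by_cases hn : n < h
          · have h1 : yR (n + 1) = yR n - tR n := by rw [htRdef]; ring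
            have h2 : xR (n + 1) = xR n - sR n := by
              have := hstepR n; omega
            rw [h1, h2, ih, htR n hn]
          · have h1 : yR (n + 1) = yR n := (hconst n (by omega)).2
            have h2 : xR (n + 1) = xR n := by
              have := hstepR n
              have := hsR0 n (by omega)
              omega
            rw [h1, h2, ih]
      have hyL : ∀ j, yL j = xL j := by
        intro j
        induction j with
        | zero => rw [hL0, hxLdef]; simp
        | succ n ih =>
          by_cases hn : n < h
          · have h1 : yL (n + 1) = yL n - tL n := by rw [htLdef]; ring
            have h2 : xL (n + 1) = xL n - sL n := by
              have := hstepL n; omega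
            rw [h1, h2, ih, htL n hn]
          · have h1 : yL (n + 1) = yL n := (hconst n (by omega)).1
            have h2 : xL (n + 1) = xL n := by
              have := hstepL n
              have := hsL0 n (by omega)
              omega
            rw [h1, h2, ih]
      exact Prod.ext (funext hyL) (funext hyR)
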